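/- arXiv:1002.3017 — 4 statements merged into one kernel-verified Lean document; each statement's English description precedes it below -/
import Mathlib

section
/- Let G be a compact abelian topological group. If K ⊆ Ĝ is a strictly positive definite set, then the subgroup of Ĝ generated by K is all of Ĝ. -/
/-- A subset `K` of the Pontryagin dual of `G` is strictly positive definite if the only
trigonometric polynomial `γ ↦ ∑ i, c i * γ (x i)` (with pairwise distinct points `x i`)
vanishing at every element of `K` is the one with all coefficients zero. -/
def IsSPDSet {G : Type*} [Monoid G] [TopologicalSpace G]
    (K : Set (PontryaginDual G)) : Prop :=
  ∀ (n : ℕ) (x : Fin n → G) (c : Fin n → ℂ), Function.Injective x →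
    (∀ γ ∈ K, ∑ i, c i * (γ (x i) : ℂ) = 0) → ∀ i, c i = 0

open MeasureTheory ComplexConjugate

/-- A strictly positive definite subset of the dual of a compact abelian group generates
the whole dual group. -/
theorem spdSet_generates
    {G : Type*} [CommGroup G] [TopologicalSpace G] [IsTopologicalGroup G] [CompactSpace G]
    (K : Set (PontryaginDual G)) (hK : IsSPDSet K) :
    Subgroup.closure K = ⊤ := by
  classical
  -- Step 1: `K` separates points of `G`.
  have hsep : ∀ x y : G, x ≠ y → ∃ γ ∈ K, γ x ≠ γ y := by
    intro x y hxy
    by_contra h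
    push_neg at h
    have hinj : Function.Injective ![x, y] := by
      intro i j hij
      fin_cases i <;> fin_cases j <;> simp_all
    have h0 := hK 2 ![x, y] ![1, -1] hinj (fun γ hγ => by
      have := h γ hγ
      simp [Fin.sum_univ_two, this]) 0
    simp at h0
  -- Step 2: hence `G` is Hausdorff.
  haveI : T2Space G := by
    refine ⟨fun x y hxy => ?_⟩
    obtain ⟨γ, _, hγ⟩ := hsep x y hxy
    exact separated_by_continuous (map_continuous γ) hγ
  by_contra hne
  obtain ⟨γ₀, hγ₀⟩ : ∃ γ₀ : PontryaginDual G, γ₀ ∉ Subgroup.closure K := by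
    by_contra h
    push_neg at h
    exact hne ((Subgroup.eq_top_iff' _).mpr h)
  set H := Subgroup.closure K with hH
  -- Step 3: set up the Haar measure.
  letI : MeasurableSpace G := borel G
  haveI : BorelSpace G := ⟨rfl⟩
  set μ : Measure G := Measure.haar with hμ
  -- characters, as continuous maps into ℂ
  let toC : PontryaginDual G → C(G, ℂ) := fun γ =>
    ⟨fun x => (γ x : ℂ), continuous_subtype_val.comp γ.continuous⟩
  have toC_apply : ∀ (γ : PontryaginDual G) (x : G), toC γ x = (γ x : ℂ) := fun _ _ => rfl
  have toC_one : toC 1 = 1 := by ext x; simp [toC_apply]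
  have toC_mul : ∀ γ γ' : PontryaginDual G, toC (γ * γ') = toC γ * toC γ' := by
    intro γ γ'; ext x; simp [toC_apply]; rfl
  have toC_star : ∀ γ : PontryaginDual G, star (toC γ) = toC γ⁻¹ := by
    intro γ; ext x
    simp only [ContinuousMap.star_apply, toC_apply]
    rw [show (γ⁻¹ x) = (γ x)⁻¹ from rfl, Circle.coe_inv_eq_conj]
    rfl
  -- Integrability of continuous functions
  have hint : ∀ f : C(G, ℂ), Integrable (fun x => f x * conj ((γ₀ x : ℂ))) μ := by
    intro f
    apply Continuous.integrable_of_hasCompactSupport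
    · exact f.continuous.mul (Complex.continuous_conj.comp
        (continuous_subtype_val.comp γ₀.continuous))
    · exact HasCompactSupport.of_compactSpace _
  -- Step 4: orthogonality: a nontrivial character integrates to zero.
  have horth : ∀ χ : PontryaginDual G, χ ≠ 1 → ∫ a, (χ a : ℂ) ∂μ = 0 := by
    intro χ hχ
    obtain ⟨g, hg⟩ : ∃ g, χ g ≠ 1 := by
      by_contra h
      push_neg at h
      exact hχ (ContinuousMonoidHom.ext fun a => h a)
    have h1 : ∫ a, (χ (g * a) : ℂ) ∂μ = ∫ a, (χ a : ℂ) ∂μ :=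
      integral_mul_left_eq_self (fun a => (χ a : ℂ)) g
    have h2 : ∀ a, (χ (g * a) : ℂ) = (χ g : ℂ) * (χ a : ℂ) := by
      intro a; rw [map_mul]; rfl
    simp_rw [h2] at h1
    rw [integral_const_mul] at h1
    have h3 : ((χ g : ℂ) - 1) * ∫ a, (χ a : ℂ) ∂μ = 0 := by ring_nf; linear_combination h1
    rcases mul_eq_zero.mp h3 with h | h
    · exact absurd (Circle.coe_injective (by rw [sub_eq_zero] at h; simpa using h)) hg
    · exact h
  -- the linear functional "inner product with γ₀"
  set φ : C(G, ℂ) → ℂ := fun f => ∫ x, f x * conj ((γ₀ x : ℂ)) ∂μ with hφ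
  set S : Set C(G, ℂ) := toC '' (H : Set (PontryaginDual G)) with hS
  -- φ vanishes on the span of S
  have hspan0 : ∀ f ∈ Submodule.span ℂ S, φ f = 0 := by
    intro f hf
    induction hf using Submodule.span_induction with
    | mem f hfS =>
      obtain ⟨γ, hγH, rfl⟩ := hfS
      have hne1 : γ * γ₀⁻¹ ≠ 1 := fun h => hγ₀ (mul_inv_eq_one.mp h ▸ hγH)
      have : ∀ x, toC γ x * conj ((γ₀ x : ℂ)) = ((γ * γ₀⁻¹) x : ℂ) := by
        intro x
        rw [toC_apply, ← Circle.coe_inv_eq_conj]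
        rfl
      simp only [hφ]
      rw [show (fun x => toC γ x * conj ((γ₀ x : ℂ))) = fun x => (((γ * γ₀⁻¹) x : ℂ)) from
        funext this]
      exact horth _ hne1
    | zero => simp [hφ]
    | add f g _ _ hf hg => simp only [hφ, ContinuousMap.add_apply, add_mul] at *
                           rw [integral_add (hint f) (hint g), hf, hg, add_zero]
    | smul c f _ hf => simp only [hφ, ContinuousMap.smul_apply, smul_eq_mul, mul_assoc] at *
                       rw [integral_const_mul, hf, mul_zero]
  -- the span of S contains the star subalgebra generated by S
  have hmulmem : ∀ f ∈ Submodule.span ℂ S, ∀ g ∈ Submodule.span ℂ S,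
      f * g ∈ Submodule.span ℂ S := by
    intro f hf g hg
    have h1 : f * g ∈ Submodule.span ℂ S * Submodule.span ℂ S := Submodule.mul_mem_mul hf hg
    rw [Submodule.span_mul_span] at h1
    refine Submodule.span_mono ?_ h1
    rintro x ⟨a, ha, b, hb, rfl⟩
    obtain ⟨γa, hγa, rfl⟩ := ha
    obtain ⟨γb, hγb, rfl⟩ := hb
    exact ⟨γa * γb, mul_mem hγa hγb, (toC_mul γa γb)⟩
  have hstarmem : ∀ f ∈ Submodule.span ℂ S, star f ∈ Submodule.span ℂ S := by
    intro f hf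
    induction hf using Submodule.span_induction with
    | mem f hfS =>
      obtain ⟨γ, hγH, rfl⟩ := hfS
      exact Submodule.subset_span ⟨γ⁻¹, inv_mem hγH, (toC_star γ).symm⟩
    | zero => simpa using Submodule.zero_mem _
    | add f g _ _ hf hg => rw [star_add]; exact Submodule.add_mem _ hf hg
    | smul c f _ hf => rw [star_smul]; exact Submodule.smul_mem _ _ hf
  have hadj : ∀ f ∈ StarAlgebra.adjoin ℂ S, f ∈ Submodule.span ℂ S := by
    intro f hf
    induction hf using StarAlgebra.adjoin_induction with
    | mem f hfS => exact Submodule.subset_span hfS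
    | algebraMap r =>
      rw [Algebra.algebraMap_eq_smul_one]
      exact Submodule.smul_mem _ _ (Submodule.subset_span ⟨1, one_mem H, toC_one⟩)
    | add f g _ _ hf hg => exact Submodule.add_mem _ hf hg
    | mul f g _ _ hf hg => exact hmulmem f hf g hg
    | star f _ hf => exact hstarmem f hf
  -- Stone–Weierstrass: the star subalgebra generated by S is dense
  have hAsep : (StarAlgebra.adjoin ℂ S).SeparatesPoints := by
    intro x y hxy
    obtain ⟨γ, hγK, hγ⟩ := hsep x y hxy
    refine ⟨_, ⟨toC γ, ?_, rfl⟩, ?_⟩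
    · exact StarAlgebra.subset_adjoin ℂ S ⟨γ, Subgroup.subset_closure hγK, rfl⟩
    · simpa [toC_apply, Circle.coe_inj] using hγ
  have htop := ContinuousMap.starSubalgebra_topologicalClosure_eq_top_of_separatesPoints
    (StarAlgebra.adjoin ℂ S) hAsep
  have hcl : toC γ₀ ∈ closure ((StarAlgebra.adjoin ℂ S : Set C(G, ℂ))) := by
    have : toC γ₀ ∈ (StarAlgebra.adjoin ℂ S).topologicalClosure := by
      rw [htop]; trivial
    exact this
  -- Step 5: derive a contradiction by comparing `φ (toC γ₀)` with `φ f` for `f` close.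
  have hμfin : μ Set.univ ≠ ⊤ := measure_ne_top μ _
  have hμpos : 0 < (μ Set.univ).toReal := by
    refine ENNReal.toReal_pos ?_ hμfin
    exact (isOpen_univ.measure_pos μ ⟨1, trivial⟩).ne'
  set t : ℝ := (μ Set.univ).toReal with ht
  have hφγ₀ : φ (toC γ₀) = (t : ℂ) := by
    have : ∀ x, toC γ₀ x * conj ((γ₀ x : ℂ)) = 1 := by
      intro x
      rw [toC_apply, ← Circle.coe_inv_eq_conj, ← Circle.coe_mul, mul_inv_cancel, Circle.coe_one]
    simp only [hφ]
    rw [show (fun x => toC γ₀ x * conj ((γ₀ x : ℂ))) = fun _ => (1 : ℂ) from funext this]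
    simp [ht, measureReal_def]
  obtain ⟨f, hfA, hfd⟩ := Metric.mem_closure_iff.mp hcl (1 / 2) (by norm_num)
  have hφf : φ f = 0 := hspan0 f (hadj f hfA)
  have hdiff : ‖φ (toC γ₀) - φ f‖ ≤ 1 / 2 * t := by
    have : φ (toC γ₀) - φ f = ∫ x, (toC γ₀ x - f x) * conj ((γ₀ x : ℂ)) ∂μ := by
      simp only [hφ]
      rw [← integral_sub (hint (toC γ₀)) (hint f)]
      congr 1; ext x; ring
    rw [this]
    calc ‖∫ x, (toC γ₀ x - f x) * conj ((γ₀ x : ℂ)) ∂μ‖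
        ≤ ∫ x, ‖(toC γ₀ x - f x) * conj ((γ₀ x : ℂ))‖ ∂μ := norm_integral_le_integral_norm _
      _ ≤ ∫ _x, (1 : ℝ) / 2 ∂μ := by
          have hint2 : Integrable (fun x => ((toC γ₀) x - f x) * conj ((γ₀ x : ℂ))) μ := by
            simpa [sub_mul, Pi.sub_def] using (hint (toC γ₀)).sub (hint f)
          apply integral_mono hint2.norm (integrable_const _)
          intro x
          have h1 : ‖conj ((γ₀ x : ℂ))‖ = 1 := by
            rw [RCLike.norm_conj, Circle.norm_coe]
          calc ‖(toC γ₀ x - f x) * conj ((γ₀ x : ℂ))‖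
              = ‖toC γ₀ x - f x‖ := by rw [norm_mul, h1, mul_one]
            _ = dist (toC γ₀ x) (f x) := (dist_eq_norm _ _).symm
            _ ≤ dist (toC γ₀) f := ContinuousMap.dist_apply_le_dist x
            _ ≤ 1 / 2 := le_of_lt hfd
      _ = 1 / 2 * t := by rw [integral_const, smul_eq_mul, mul_comm, ht, measureReal_def]
  rw [hφf, sub_zero, hφγ₀] at hdiff
  rw [Complex.norm_real, Real.norm_eq_abs, abs_of_pos hμpos] at hdiff
  nlinarith
end

section
/- Let G be a compact abelian topological group (Hausdorff). There exists a continuous strictly positive definite function f : G → ℂ if and only if G is metrizable. -/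
open scoped ComplexOrder

/-- `f : G → ℂ` is positive definite if all the quadratic-form sums are nonnegative reals
(using the partial order on `ℂ`). -/
def IsPosDefFun {G : Type*} [Group G] (f : G → ℂ) : Prop :=
  ∀ (n : ℕ) (x : Fin n → G) (c : Fin n → ℂ),
    0 ≤ ∑ i, ∑ j, c i * (starRingEnd ℂ) (c j) * f ((x j)⁻¹ * x i)

/-- `f : G → ℂ` is strictly positive definite if it is positive definite and the sums are
strictly positive whenever the points are pairwise distinct and the coefficients are not
all zero. -/
def IsStrictPosDefFun {G : Type*} [Group G] (f : G → ℂ) : Prop :=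
  IsPosDefFun f ∧ ∀ (n : ℕ) (x : Fin n → G) (c : Fin n → ℂ),
    Function.Injective x → c ≠ 0 →
    0 < ∑ i, ∑ j, c i * (starRingEnd ℂ) (c j) * f ((x j)⁻¹ * x i)

open MeasureTheory in
theorem aux_bwd (G : Type*) [CommGroup G] [TopologicalSpace G] [IsTopologicalGroup G]
    [CompactSpace G] [T2Space G] (hm : TopologicalSpace.MetrizableSpace G) :
    ∃ f : G → ℂ, Continuous f ∧ IsStrictPosDefFun f := by
  classical
  letI : MetricSpace G := TopologicalSpace.metrizableSpaceMetric G
  letI : MeasurableSpace G := borel G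
  haveI : BorelSpace G := ⟨rfl⟩
  set μ : Measure G := MeasureTheory.Measure.haar with hmu
  set r : ℕ → ℝ := fun k : ℕ => 1 / ((k : ℝ) + 1) with hrdef
  have hr_pos : ∀ k, 0 < r k := fun k => by positivity
  have hr_le_one : ∀ k, r k ≤ 1 := fun k => by
    rw [hrdef]; rw [div_le_one (by positivity)]; linarith [Nat.cast_nonneg (α := ℝ) k]
  have hr_anti : ∀ {k l : ℕ}, k ≤ l → r l ≤ r k := fun {k l} hkl => by
    apply one_div_le_one_div_of_le (by positivity)
    have : (k : ℝ) ≤ (l : ℝ) := by exact_mod_cast hkl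
    linarith
  set h : ℕ → G → ℝ := fun k t => max 0 (r k - dist t 1) with hhdef
  have h_cont : ∀ k, Continuous (h k) := fun k => by
    apply Continuous.max continuous_const
    exact continuous_const.sub (continuous_id.dist continuous_const)
  have h_nonneg : ∀ k t, 0 ≤ h k t := fun k t => le_max_left _ _
  have h_le_one : ∀ k t, h k t ≤ 1 := fun k t => by
    apply max_le (by norm_num)
    have := dist_nonneg (x := t) (y := (1:G)); have := hr_le_one k; linarith
  have h_one : ∀ k, h k 1 = r k := fun k => by
    simp [hhdef, (hr_pos k).le]
  have h_supp : ∀ k t, h k t ≠ 0 → dist t 1 ≤ r k := fun k t ht => by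
    by_contra hcon; push_neg at hcon
    exact ht (by simp [hhdef]; linarith)
  have integ : ∀ {E : Type} [NormedAddCommGroup E] {φ : G → E}, Continuous φ → Integrable φ μ := by
    intro E _ φ hφ
    exact hφ.integrable_of_hasCompactSupport
      (IsCompact.of_isClosed_subset isCompact_univ (isClosed_tsupport _) (Set.subset_univ _))
  set M : ℝ := (μ Set.univ).toReal with hM
  have hM0 : 0 ≤ M := ENNReal.toReal_nonneg
  set I : ℕ → G → ℝ := fun k g => ∫ t, h k (t * g) * h k t ∂μ with hI
  have prod01 : ∀ k (a b : G), |h k a * h k b| ≤ 1 := by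
    intro k a b
    rw [abs_mul, abs_of_nonneg (h_nonneg k a), abs_of_nonneg (h_nonneg k b)]
    exact mul_le_one₀ (h_le_one k a) (h_nonneg k b) (h_le_one k b)
  have I_bound : ∀ k g, |I k g| ≤ M := by
    intro k g
    calc |I k g| ≤ ∫ t, |h k (t * g)| * |h k t| ∂μ := by
          simpa [Real.norm_eq_abs, abs_mul, hI] using
            norm_integral_le_integral_norm (μ := μ) (f := fun t => h k (t * g) * h k t)
      _ ≤ ∫ _t, (1:ℝ) ∂μ := by
          apply integral_mono
            (((integ (((h_cont k).comp (continuous_mul_right g)).mul (h_cont k))).abs).congr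
              (Filter.Eventually.of_forall fun t => by simp [abs_mul, Function.comp]))
            (integrable_const 1)
          intro t; simpa [← abs_mul] using prod01 k (t*g) t
      _ = M := by simp [hM, smul_eq_mul, measureReal_def]
  have I_cont : ∀ k, Continuous (I k) := by
    intro k
    apply continuous_of_dominated (bound := fun _ => (1:ℝ))
    · intro g
      exact (((h_cont k).comp (continuous_mul_right g)).mul (h_cont k)).aestronglyMeasurable
    · intro g; filter_upwards with t
      rw [Real.norm_eq_abs]; exact prod01 k _ _
    · exact integrable_const 1
    · filter_upwards with t
      exact (((h_cont k).comp (continuous_mul_left t)).mul continuous_const)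
  set F : G → ℝ := fun g => ∑' k, (1/2:ℝ)^k * I k g with hF
  have summF : ∀ g, Summable (fun k => (1/2:ℝ)^k * I k g) := by
    intro g
    apply Summable.of_norm_bounded (g := fun k => (1/2:ℝ)^k * M)
    · exact (summable_geometric_of_lt_one (by norm_num) (by norm_num)).mul_right M
    · intro k
      rw [Real.norm_eq_abs, abs_mul, abs_of_nonneg (by positivity)]
      exact mul_le_mul_of_nonneg_left (I_bound k g) (by positivity)
  have F_cont : Continuous F := by
    apply continuous_tsum (u := fun k => (1/2:ℝ)^k * M)
    · exact fun k => continuous_const.mul (I_cont k)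
    · exact (summable_geometric_of_lt_one (by norm_num) (by norm_num)).mul_right M
    · intro k g
      rw [Real.norm_eq_abs, abs_mul, abs_of_nonneg (by positivity)]
      exact mul_le_mul_of_nonneg_left (I_bound k g) (by positivity)
  have key : ∀ (n : ℕ) (x : Fin n → G) (c : Fin n → ℂ),
      ∑ i, ∑ j, c i * (starRingEnd ℂ) (c j) * ((F ((x j)⁻¹ * x i) : ℝ) : ℂ)
      = ((∑' k, (1/2:ℝ)^k *
          ∫ t, Complex.normSq (∑ i, c i * ((h k (t * x i) : ℝ) : ℂ)) ∂μ : ℝ) : ℂ) := by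
    intro n x c
    set J : ℕ → ℝ := fun k => ∫ t, Complex.normSq (∑ i, c i * ((h k (t * x i) : ℝ) : ℂ)) ∂μ with hJ
    have S_cont : ∀ k, Continuous (fun t => ∑ i, c i * ((h k (t * x i) : ℝ) : ℂ)) := by
      intro k
      exact continuous_finset_sum _ fun i _ => continuous_const.mul
        (Complex.continuous_ofReal.comp ((h_cont k).comp (continuous_mul_right (x i))))
    have step1 : ∀ k (a b : G), I k (b⁻¹ * a) = ∫ t, h k (t * a) * h k (t * b) ∂μ := by
      intro k a b
      have hsub := integral_mul_right_eq_self (μ := μ)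
        (fun t => h k (t * (b⁻¹ * a)) * h k t) b
      rw [hI]
      simp only []
      rw [← hsub]
      congr 1
      ext t
      have : t * b * (b⁻¹ * a) = t * a := by group
      rw [this]
    -- bound on J
    set B : ℝ := (∑ i, ‖c i‖)^2 with hB
    have normSq_le : ∀ k t, Complex.normSq (∑ i, c i * ((h k (t * x i) : ℝ) : ℂ)) ≤ B := by
      intro k t
      rw [hB, ← Complex.sq_norm]
      apply pow_le_pow_left₀ (norm_nonneg _)
      calc ‖∑ i, c i * ((h k (t * x i) : ℝ) : ℂ)‖
          ≤ ∑ i, ‖c i * ((h k (t * x i) : ℝ) : ℂ)‖ := by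
            simpa using norm_sum_le Finset.univ (fun i => c i * ((h k (t * x i) : ℝ) : ℂ))
        _ ≤ ∑ i, ‖c i‖ := by
            apply Finset.sum_le_sum
            intro i _
            rw [norm_mul]
            nth_rewrite 2 [← mul_one (‖c i‖)]
            apply mul_le_mul_of_nonneg_left _ (norm_nonneg _)
            rw [Complex.norm_real, Real.norm_eq_abs, abs_of_nonneg (h_nonneg k _)]
            exact h_le_one k _
    have J_nonneg : ∀ k, 0 ≤ J k := fun k =>
      integral_nonneg fun t => Complex.normSq_nonneg _
    have J_le : ∀ k, J k ≤ M * B := by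
      intro k
      calc J k ≤ ∫ _t, B ∂μ := by
            apply integral_mono (integ ?_) (integrable_const B) (fun t => normSq_le k t)
            exact Complex.continuous_normSq.comp (S_cont k)
        _ = M * B := by simp [hM, smul_eq_mul, measureReal_def]
    have summJ : Summable (fun k => (1/2:ℝ)^k * J k) := by
      apply Summable.of_norm_bounded (g := fun k => (1/2:ℝ)^k * (M*B))
      · exact (summable_geometric_of_lt_one (by norm_num) (by norm_num)).mul_right _
      · intro k
        rw [Real.norm_eq_abs, abs_mul, abs_of_nonneg (by positivity),
          abs_of_nonneg (J_nonneg k)]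
        exact mul_le_mul_of_nonneg_left (J_le k) (by positivity)
    have step2 : ∀ k, ∑ i, ∑ j, c i * (starRingEnd ℂ) (c j) * ((I k ((x j)⁻¹ * x i) : ℝ) : ℂ)
        = ((J k : ℝ) : ℂ) := by
      intro k
      have integrand_int : ∀ (i j : Fin n),
          Integrable (fun t => c i * (starRingEnd ℂ) (c j) *
            (((h k (t * x i) * h k (t * x j) : ℝ) : ℝ) : ℂ)) μ := by
        intro i j
        apply integ
        exact continuous_const.mul (Complex.continuous_ofReal.comp
          (((h_cont k).comp (continuous_mul_right (x i))).mul
            ((h_cont k).comp (continuous_mul_right (x j)))))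
      calc ∑ i, ∑ j, c i * (starRingEnd ℂ) (c j) * ((I k ((x j)⁻¹ * x i) : ℝ) : ℂ)
          = ∑ i, ∑ j, ∫ t, c i * (starRingEnd ℂ) (c j) *
              ((h k (t * x i) * h k (t * x j) : ℝ) : ℂ) ∂μ := by
            refine Finset.sum_congr rfl fun i _ => Finset.sum_congr rfl fun j _ => ?_
            have e2 : ((∫ t, h k (t * x i) * h k (t * x j) ∂μ : ℝ) : ℂ)
                = ∫ t, ((h k (t * x i) * h k (t * x j) : ℝ) : ℂ) ∂μ := integral_ofReal.symm
            rw [step1 k (x i) (x j), e2, ← integral_const_mul]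
        _ = ∫ t, ∑ i, ∑ j, c i * (starRingEnd ℂ) (c j) *
              ((h k (t * x i) * h k (t * x j) : ℝ) : ℂ) ∂μ := by
            rw [integral_finset_sum _ (fun i _ => integrable_finset_sum _
              (fun j _ => integrand_int i j))]
            exact Finset.sum_congr rfl fun i _ =>
              (integral_finset_sum _ (fun j _ => integrand_int i j)).symm
        _ = ∫ t, ((Complex.normSq (∑ i, c i * ((h k (t * x i) : ℝ) : ℂ)) : ℝ) : ℂ) ∂μ := by
            congr 1
            ext t
            rw [← Complex.mul_conj, map_sum, Finset.sum_mul_sum]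
            refine Finset.sum_congr rfl fun i _ => Finset.sum_congr rfl fun j _ => ?_
            rw [map_mul, Complex.conj_ofReal]
            push_cast
            ring
        _ = ((J k : ℝ) : ℂ) := integral_ofReal
    -- step 3: assemble
    have summIc : ∀ (g : G) (a : ℂ), Summable (fun k => a * (((1/2:ℝ)^k * I k g : ℝ) : ℂ)) := by
      intro g a
      exact ((Complex.summable_ofReal.mpr (summF g)).mul_left a)
    calc ∑ i, ∑ j, c i * (starRingEnd ℂ) (c j) * ((F ((x j)⁻¹ * x i) : ℝ) : ℂ)
        = ∑ i, ∑ j, ∑' k, c i * (starRingEnd ℂ) (c j) *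
            (((1/2:ℝ)^k * I k ((x j)⁻¹ * x i) : ℝ) : ℂ) := by
          refine Finset.sum_congr rfl fun i _ => Finset.sum_congr rfl fun j _ => ?_
          rw [hF]
          simp only []
          rw [Complex.ofReal_tsum, tsum_mul_left]
      _ = ∑' k, ∑ i, ∑ j, c i * (starRingEnd ℂ) (c j) *
            (((1/2:ℝ)^k * I k ((x j)⁻¹ * x i) : ℝ) : ℂ) := by
          have hA : ∀ (i j : Fin n), Summable (fun k => c i * (starRingEnd ℂ) (c j) *
              (((1/2:ℝ)^k * I k ((x j)⁻¹ * x i) : ℝ) : ℂ)) := fun i j => summIc _ _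
          calc ∑ i, ∑ j, ∑' k, c i * (starRingEnd ℂ) (c j) *
                (((1/2:ℝ)^k * I k ((x j)⁻¹ * x i) : ℝ) : ℂ)
              = ∑ i, ∑' k, ∑ j, c i * (starRingEnd ℂ) (c j) *
                (((1/2:ℝ)^k * I k ((x j)⁻¹ * x i) : ℝ) : ℂ) :=
                Finset.sum_congr rfl fun i _ => (Summable.tsum_finsetSum (fun j _ => hA i j)).symm
            _ = ∑' k, ∑ i, ∑ j, c i * (starRingEnd ℂ) (c j) *
                (((1/2:ℝ)^k * I k ((x j)⁻¹ * x i) : ℝ) : ℂ) :=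
                (Summable.tsum_finsetSum (fun i _ => summable_sum (fun j _ => hA i j))).symm
      _ = ∑' k, (((1/2:ℝ)^k * J k : ℝ) : ℂ) := by
          refine tsum_congr fun k => ?_
          have e1 : ∑ i, ∑ j, c i * (starRingEnd ℂ) (c j) *
              (((1/2:ℝ)^k * I k ((x j)⁻¹ * x i) : ℝ) : ℂ)
              = (((1/2:ℝ)^k : ℝ) : ℂ) * ∑ i, ∑ j, c i * (starRingEnd ℂ) (c j) *
                ((I k ((x j)⁻¹ * x i) : ℝ) : ℂ) := by
            rw [Finset.mul_sum]
            refine Finset.sum_congr rfl fun i _ => ?_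
            rw [Finset.mul_sum]
            refine Finset.sum_congr rfl fun j _ => ?_
            push_cast
            ring
          rw [e1, step2 k]
          push_cast
          ring
      _ = ((∑' k, (1/2:ℝ)^k * J k : ℝ) : ℂ) := by rw [Complex.ofReal_tsum]
  have strictpos : ∀ (n : ℕ) (x : Fin n → G) (c : Fin n → ℂ),
      Function.Injective x → c ≠ 0 →
      ∃ k, 0 < ∫ t, Complex.normSq (∑ i, c i * ((h k (t * x i) : ℝ) : ℂ)) ∂μ := by
    intro n x c hx hc
    have hz : ∀ z : G, ∃ k : ℕ, z ≠ 1 →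
        ∀ a b : G, dist a 1 ≤ r k → dist b 1 ≤ r k → a⁻¹ * b ≠ z := by
      intro z
      by_cases hz1 : z = 1
      · exact ⟨0, fun hcon => absurd hz1 hcon⟩
      · have hcont : Continuous fun p : G × G => p.1⁻¹ * p.2 := by fun_prop
        have hopen : IsOpen ((fun p : G × G => p.1⁻¹ * p.2) ⁻¹' {z}ᶜ) :=
          isOpen_compl_singleton.preimage hcont
        have hmem : ((1 : G), (1 : G)) ∈ (fun p : G × G => p.1⁻¹ * p.2) ⁻¹' {z}ᶜ := by
          simp [Ne.symm hz1]
        have hnhds := hopen.mem_nhds hmem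
        rw [nhds_prod_eq, Filter.mem_prod_iff] at hnhds
        obtain ⟨U, hU, V, hV, hUV⟩ := hnhds
        obtain ⟨ε1, hε1, hball1⟩ := Metric.mem_nhds_iff.mp hU
        obtain ⟨ε2, hε2, hball2⟩ := Metric.mem_nhds_iff.mp hV
        obtain ⟨k, hk⟩ := exists_nat_one_div_lt (lt_min hε1 hε2)
        refine ⟨k, fun _ a b ha hb => ?_⟩
        have hrk : r k < min ε1 ε2 := by rw [hrdef]; exact_mod_cast hk
        have haU : a ∈ U := hball1 (by
          rw [Metric.mem_ball]; exact lt_of_le_of_lt ha (lt_of_lt_of_le hrk (min_le_left _ _)))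
        have hbV : b ∈ V := hball2 (by
          rw [Metric.mem_ball]; exact lt_of_le_of_lt hb (lt_of_lt_of_le hrk (min_le_right _ _)))
        have := hUV (Set.mk_mem_prod haU hbV)
        simpa using this
    choose K hK using hz
    obtain ⟨i₀, hi₀⟩ := Function.ne_iff.mp hc
    set D : Finset G := Finset.image (fun p : Fin n × Fin n => (x p.1)⁻¹ * x p.2) Finset.univ
      with hD
    set k₀ : ℕ := D.sup K with hk₀
    have hKd : ∀ z ∈ D, z ≠ 1 → ∀ a b : G, dist a 1 ≤ r k₀ → dist b 1 ≤ r k₀ → a⁻¹ * b ≠ z := by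
      intro z hzD hz1 a b ha hb
      exact hK z hz1 a b (le_trans ha (hr_anti (Finset.le_sup hzD)))
        (le_trans hb (hr_anti (Finset.le_sup hzD)))
    set t₀ : G := (x i₀)⁻¹ with ht₀
    have hvanish : ∀ i, i ≠ i₀ → h k₀ (t₀ * x i) = 0 := by
      intro i hi
      by_contra hne
      have hb := h_supp k₀ _ hne
      have ha : dist (t₀ * x i₀) 1 ≤ r k₀ := by
        rw [ht₀, inv_mul_cancel]; simp [(hr_pos k₀).le]
      have hzD : (x i₀)⁻¹ * x i ∈ D := by
        rw [hD]; exact Finset.mem_image.mpr ⟨(i₀, i), Finset.mem_univ _, rfl⟩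
      have hz1 : (x i₀)⁻¹ * x i ≠ 1 := by
        intro hcon
        have : x i₀ = x i := by rwa [inv_mul_eq_one] at hcon
        exact hi (hx this).symm
      have := hKd _ hzD hz1 (t₀ * x i₀) (t₀ * x i) ha hb
      apply this
      rw [ht₀]
      group
    have hsum : ∑ i, c i * ((h k₀ (t₀ * x i) : ℝ) : ℂ) = c i₀ * ((r k₀ : ℝ) : ℂ) := by
      rw [Finset.sum_eq_single i₀]
      · rw [ht₀, inv_mul_cancel, h_one]
      · intro i _ hi
        rw [hvanish i hi]
        simp
      · intro hcon
        exact absurd (Finset.mem_univ i₀) hcon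
    refine ⟨k₀, ?_⟩
    set g : G → ℝ := fun t => Complex.normSq (∑ i, c i * ((h k₀ (t * x i) : ℝ) : ℂ)) with hg
    have hg_cont : Continuous g := Complex.continuous_normSq.comp
      (continuous_finset_sum _ fun i _ => continuous_const.mul
        (Complex.continuous_ofReal.comp ((h_cont k₀).comp (continuous_mul_right (x i)))))
    have hg_nonneg : (0 : G → ℝ) ≤ g := fun t => Complex.normSq_nonneg _
    rw [integral_pos_iff_support_of_nonneg hg_nonneg (integ hg_cont)]
    have hg_t₀ : g t₀ ≠ 0 := by
      rw [hg]
      simp only [hsum]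
      intro hcon
      rcases Complex.normSq_eq_zero.mp hcon |> mul_eq_zero.mp with h1 | h2
      · exact hi₀ (by simpa using h1)
      · rw [Complex.ofReal_eq_zero] at h2
        exact (hr_pos k₀).ne' h2
    have hopen : IsOpen (Function.support g) := by
      have : Function.support g = g ⁻¹' {0}ᶜ := by
        ext t; simp [Function.mem_support]
      rw [this]
      exact isOpen_compl_singleton.preimage hg_cont
    exact hopen.measure_pos μ ⟨t₀, hg_t₀⟩
  have J_nonneg : ∀ (n : ℕ) (x : Fin n → G) (c : Fin n → ℂ) (k : ℕ),
      0 ≤ ∫ t, Complex.normSq (∑ i, c i * ((h k (t * x i) : ℝ) : ℂ)) ∂μ :=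
    fun n x c k => integral_nonneg fun t => Complex.normSq_nonneg _
  have summJ : ∀ (n : ℕ) (x : Fin n → G) (c : Fin n → ℂ),
      Summable (fun k => (1/2:ℝ)^k *
        ∫ t, Complex.normSq (∑ i, c i * ((h k (t * x i) : ℝ) : ℂ)) ∂μ) := by
    intro n x c
    set B : ℝ := (∑ i, ‖c i‖)^2 with hB
    have normSq_le : ∀ k t, Complex.normSq (∑ i, c i * ((h k (t * x i) : ℝ) : ℂ)) ≤ B := by
      intro k t
      rw [hB, ← Complex.sq_norm]
      apply pow_le_pow_left₀ (norm_nonneg _)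
      calc ‖∑ i, c i * ((h k (t * x i) : ℝ) : ℂ)‖
          ≤ ∑ i, ‖c i * ((h k (t * x i) : ℝ) : ℂ)‖ := by
            simpa using norm_sum_le Finset.univ (fun i => c i * ((h k (t * x i) : ℝ) : ℂ))
        _ ≤ ∑ i, ‖c i‖ := by
            apply Finset.sum_le_sum
            intro i _
            rw [norm_mul]
            nth_rewrite 2 [← mul_one (‖c i‖)]
            apply mul_le_mul_of_nonneg_left _ (norm_nonneg _)
            rw [Complex.norm_real, Real.norm_eq_abs, abs_of_nonneg (h_nonneg k _)]
            exact h_le_one k _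
    apply Summable.of_norm_bounded (g := fun k => (1/2:ℝ)^k * (M*B))
    · exact (summable_geometric_of_lt_one (by norm_num) (by norm_num)).mul_right _
    · intro k
      rw [Real.norm_eq_abs, abs_mul, abs_of_nonneg (by positivity),
        abs_of_nonneg (J_nonneg n x c k)]
      refine mul_le_mul_of_nonneg_left ?_ (by positivity)
      calc (∫ t, Complex.normSq (∑ i, c i * ((h k (t * x i) : ℝ) : ℂ)) ∂μ)
          ≤ ∫ _t, B ∂μ := by
            apply integral_mono (integ ?_) (integrable_const B) (fun t => normSq_le k t)
            exact Complex.continuous_normSq.comp (continuous_finset_sum _ fun i _ =>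
              continuous_const.mul (Complex.continuous_ofReal.comp
                ((h_cont k).comp (continuous_mul_right (x i)))))
        _ = M * B := by simp [hM, smul_eq_mul, measureReal_def]
  refine ⟨fun g => ((F g : ℝ) : ℂ), Complex.continuous_ofReal.comp F_cont, ?_, ?_⟩
  · intro n x c
    show 0 ≤ ∑ i, ∑ j, c i * (starRingEnd ℂ) (c j) * ((F ((x j)⁻¹ * x i) : ℝ) : ℂ)
    rw [key n x c]
    exact Complex.zero_le_real.mpr (tsum_nonneg fun k =>
      mul_nonneg (by positivity) (J_nonneg n x c k))
  · intro n x c hx hc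
    show 0 < ∑ i, ∑ j, c i * (starRingEnd ℂ) (c j) * ((F ((x j)⁻¹ * x i) : ℝ) : ℂ)
    rw [key n x c]
    obtain ⟨k₀, hk₀⟩ := strictpos n x c hx hc
    exact Complex.zero_lt_real.mpr (Summable.tsum_pos (summJ n x c)
      (fun k => mul_nonneg (by positivity) (J_nonneg n x c k)) k₀
      (mul_pos (by positivity) hk₀))

/-- A compact Hausdorff abelian group admits a continuous strictly positive definite
function iff it is metrizable. -/
theorem exists_continuous_strictPosDefFun_iff_metrizable
    (G : Type*) [CommGroup G] [TopologicalSpace G] [IsTopologicalGroup G]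
    [CompactSpace G] [T2Space G] :
    (∃ f : G → ℂ, Continuous f ∧ IsStrictPosDefFun f) ↔
      TopologicalSpace.MetrizableSpace G := by
  constructor
  · rintro ⟨f, hf, hs⟩
    let F : C(G × G, ℂ) := ⟨fun p => f (p.2 * p.1), by fun_prop⟩
    let Φ : C(G, C(G, ℂ)) := F.curry
    have hinj : Function.Injective (Φ : G → C(G, ℂ)) := by
      intro x y hxy
      by_contra hne
      have hval : ∀ t, f (t * x) = f (t * y) := by
        intro t
        have := ContinuousMap.congr_fun hxy t
        simpa [Φ, F] using this
      have hxinj : Function.Injective (![x, y] : Fin 2 → G) := by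
        intro i j hij
        fin_cases i <;> fin_cases j <;> simp_all
      have hc : (![1, -1] : Fin 2 → ℂ) ≠ 0 := by
        intro h
        have := congrFun h 0
        simp at this
      have hpos := hs.2 2 ![x, y] ![1, -1] hxinj hc
      have e1 : f (x⁻¹ * y) = f 1 := by simpa using (hval x⁻¹).symm
      have e2 : f (y⁻¹ * x) = f 1 := by simpa using (hval y⁻¹)
      rw [Fin.sum_univ_two] at hpos
      simp only [Fin.sum_univ_two] at hpos
      simp [e1, e2] at hpos
    exact (Φ.continuous.isClosedEmbedding hinj).toIsEmbedding.metrizableSpace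
  · exact aux_bwd G
end

section
/- Let G₁ and G₂ be compact abelian topological groups, identify the Pontryagin dual of G₁ × G₂ with Ĝ₁ × Ĝ₂, and let K ⊆ Ĝ₁ × Ĝ₂. For γ ∈ Ĝ₁ set K₂(γ) = {ω ∈ Ĝ₂ : (γ, ω) ∈ K}, and set K₁ = {γ ∈ Ĝ₁ : K₂(γ) is a strictly positive definite subset of Ĝ₂}. If K₁ is a strictly positive definite subset of Ĝ₁, then the set K̃ = ⋃_{γ ∈ K₁} {γ} × K₂(γ) is a strictly positive definite subset of Ĝ₁ × Ĝ₂; in particular K (which contains K̃) is strictly positive definite. -/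
/-- Strict positive definiteness for subsets of `Ĝ₁ × Ĝ₂`, identified with the dual of
`G₁ × G₂` via `(γ, ω)(x, y) = γ(x)ω(y)`: the only trigonometric polynomial
`(γ, ω) ↦ ∑ i, c i * γ (x i) * ω (y i)` with pairwise distinct points `(x i, y i)`
vanishing on `K` has all coefficients zero. -/
def IsSPDSetProd {G₁ G₂ : Type*} [Monoid G₁] [TopologicalSpace G₁]
    [Monoid G₂] [TopologicalSpace G₂]
    (K : Set (PontryaginDual G₁ × PontryaginDual G₂)) : Prop :=
  ∀ (n : ℕ) (z : Fin n → G₁ × G₂) (c : Fin n → ℂ), Function.Injective z →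
    (∀ χ ∈ K, ∑ i, c i * (χ.1 (z i).1 : ℂ) * (χ.2 (z i).2 : ℂ) = 0) → ∀ i, c i = 0

/-- If the set `K₁` of those `γ ∈ Ĝ₁` for which the slice `K₂(γ)` is strictly positive
definite is itself strictly positive definite, then `K̃ = ⋃_{γ ∈ K₁} {γ} × K₂(γ)` — and in
particular `K` — is a strictly positive definite subset of `Ĝ₁ × Ĝ₂`. -/
theorem spd_of_prod
    {G₁ G₂ : Type*}
    [CommGroup G₁] [TopologicalSpace G₁] [IsTopologicalGroup G₁] [CompactSpace G₁]
    [CommGroup G₂] [TopologicalSpace G₂] [IsTopologicalGroup G₂] [CompactSpace G₂]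
    (K : Set (PontryaginDual G₁ × PontryaginDual G₂))
    (hK₁ : IsSPDSet {γ : PontryaginDual G₁ |
      IsSPDSet {ω : PontryaginDual G₂ | (γ, ω) ∈ K}}) :
    IsSPDSetProd {χ : PontryaginDual G₁ × PontryaginDual G₂ |
        IsSPDSet {ω : PontryaginDual G₂ | (χ.1, ω) ∈ K} ∧ χ ∈ K} ∧
      IsSPDSetProd K := by
  classical
  have h : IsSPDSetProd {χ : PontryaginDual G₁ × PontryaginDual G₂ |
      IsSPDSet {ω : PontryaginDual G₂ | (χ.1, ω) ∈ K} ∧ χ ∈ K} := by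
    intro n z c hz hvan i
    -- Step 1: for every γ in K₁, the fiberwise coefficients vanish.
    have key : ∀ γ ∈ {γ : PontryaginDual G₁ |
        IsSPDSet {ω : PontryaginDual G₂ | (γ, ω) ∈ K}}, ∀ b : G₂,
        ∑ j ∈ Finset.univ.filter (fun j => (z j).2 = b),
          c j * (γ (z j).1 : ℂ) = 0 := by
      intro γ hγ b
      set S : Finset G₂ := Finset.univ.image (fun j => (z j).2) with hSdef
      set d : G₂ → ℂ := fun b =>
        ∑ j ∈ Finset.univ.filter (fun j => (z j).2 = b), c j * (γ (z j).1 : ℂ) with hd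
      by_cases hb : b ∈ S
      · -- apply SPD of the slice
        have e : Fin S.card ≃ {x // x ∈ S} := S.equivFin.symm
        have hx : Function.Injective (fun j => (e j : G₂)) :=
          fun a a' h => e.injective (Subtype.ext h)
        have hvan2 : ∀ ω ∈ {ω : PontryaginDual G₂ | (γ, ω) ∈ K},
            ∑ j, (d (e j)) * (ω (e j : G₂) : ℂ) = 0 := by
          intro ω hω
          have : ∑ j, (d (e j)) * (ω (e j : G₂) : ℂ)
              = ∑ b ∈ S, d b * (ω b : ℂ) := by
            rw [← Finset.sum_coe_sort S (fun b => d b * (ω b : ℂ))]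
            exact Equiv.sum_comp e (fun a : {x // x ∈ S} => d a * (ω (a : G₂) : ℂ))
          rw [this]
          have expand : ∑ b ∈ S, d b * (ω b : ℂ)
              = ∑ j, c j * (γ (z j).1 : ℂ) * (ω (z j).2 : ℂ) := by
            rw [← Finset.sum_fiberwise_of_maps_to
              (g := fun j => (z j).2) (t := S)
              (fun j _ => Finset.mem_image_of_mem _ (Finset.mem_univ j))
              (fun j => c j * (γ (z j).1 : ℂ) * (ω (z j).2 : ℂ))]
            refine Finset.sum_congr rfl fun b _ => ?_
            rw [hd]
            simp only [Finset.sum_mul]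
            refine Finset.sum_congr rfl fun j hj => ?_
            rw [(Finset.mem_filter.mp hj).2]
          rw [expand]
          exact hvan (γ, ω) ⟨hγ, hω⟩
        have := hγ S.card (fun j => (e j : G₂)) (fun j => d (e j)) hx hvan2
        have h0 := this (e.symm ⟨b, hb⟩)
        simp only [Equiv.apply_symm_apply] at h0
        exact h0
      · -- empty fiber
        have : Finset.univ.filter (fun j => (z j).2 = b) = ∅ := by
          apply Finset.filter_false_of_mem
          intro j _ hjb
          exact hb (hjb ▸ Finset.mem_image_of_mem _ (Finset.mem_univ j))
        simp [this]
    -- Step 2: fix i, apply SPD of K₁ to the fiber of (z i).2.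
    set b := (z i).2 with hbdef
    set T : Finset (Fin n) := Finset.univ.filter (fun j => (z j).2 = b) with hT
    have hiT : i ∈ T := by simp [hT, hbdef]
    have e : Fin T.card ≃ {x // x ∈ T} := T.equivFin.symm
    have hxinj : Function.Injective (fun j => (z (e j : Fin n)).1) := by
      intro a a' hh
      apply e.injective
      apply Subtype.ext
      apply hz
      have h2 : (z (e a : Fin n)).2 = (z (e a' : Fin n)).2 := by
        have ha := (Finset.mem_filter.mp (e a).2).2
        have ha' := (Finset.mem_filter.mp (e a').2).2
        rw [ha, ha']
      exact Prod.ext hh h2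
    have hvan1 : ∀ γ ∈ {γ : PontryaginDual G₁ |
        IsSPDSet {ω : PontryaginDual G₂ | (γ, ω) ∈ K}},
        ∑ j, c (e j : Fin n) * (γ (z (e j : Fin n)).1 : ℂ) = 0 := by
      intro γ hγ
      have : ∑ j, c (e j : Fin n) * (γ (z (e j : Fin n)).1 : ℂ)
          = ∑ j ∈ T, c j * (γ (z j).1 : ℂ) := by
        rw [← Finset.sum_coe_sort T (fun j => c j * (γ (z j).1 : ℂ))]
        exact Equiv.sum_comp e (fun a : {x // x ∈ T} => c a * (γ (z a).1 : ℂ))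
      rw [this]
      exact key γ hγ b
    have hall := hK₁ T.card (fun j => (z (e j : Fin n)).1)
      (fun j => c (e j : Fin n)) hxinj hvan1
    have := hall (e.symm ⟨i, hiT⟩)
    simpa using this
  refine ⟨h, ?_⟩
  intro n z c hz hvan
  exact h n z c hz (fun χ hχ => hvan χ hχ.2)
end

section
/- The set K = ⋃_{n=1}^∞ {n} × {m ∈ ℤ : |m| ≤ n} ⊆ ℤ² is a strictly positive definite subset of ℤ² (the dual of 𝕋²). -/
open Finset

lemma keyA {ι : Type*} [DecidableEq ι] (a : ι → ℂ) (N : ℤ) :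
    ∀ (s : Finset ι) (c : ι → ℂ), (∀ i ∈ s, a i ≠ 0) → Set.InjOn a s →
    (∀ j : ℤ, N ≤ j → j < N + s.card → ∑ i ∈ s, c i * a i ^ j = 0) →
    ∀ i ∈ s, c i = 0 := by
  intro s
  induction s using Finset.induction with
  | empty => intro c _ _ _ i hi; exact absurd hi (by simp)
  | @insert i0 t hnot ih =>
    intro c hne hinj h
    have hC : (insert i0 t).card = t.card + 1 := Finset.card_insert_of_notMem hnot
    have hi0 : a i0 ≠ 0 := hne i0 (mem_insert_self _ _)
    have h2 : ∀ j : ℤ, N ≤ j → j < N + t.card →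
        ∑ i ∈ t, (c i * (a i - a i0)) * a i ^ j = 0 := by
      intro j hj hj2
      have e1 := h j hj (by push_cast [hC]; linarith)
      have e2 := h (j + 1) (by linarith) (by push_cast [hC]; linarith)
      rw [Finset.sum_insert hnot] at e1 e2
      have er : ∀ i ∈ t, (c i * (a i - a i0)) * a i ^ j
          = c i * a i ^ (j + 1) - a i0 * (c i * a i ^ j) := by
        intro i hi
        have hai : a i ≠ 0 := hne i (mem_insert_of_mem hi)
        rw [zpow_add_one₀ hai]; ring
      rw [Finset.sum_congr rfl er, Finset.sum_sub_distrib, ← Finset.mul_sum]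
      rw [zpow_add_one₀ hi0] at e2
      linear_combination e2 - a i0 * e1
    have hct : ∀ i ∈ t, c i * (a i - a i0) = 0 :=
      ih (fun i => c i * (a i - a i0)) (fun i hi => hne i (mem_insert_of_mem hi))
        (hinj.mono (by simp [Finset.coe_subset, Finset.subset_insert])) h2
    have hct' : ∀ i ∈ t, c i = 0 := by
      intro i hi
      have hne' : a i - a i0 ≠ 0 := by
        refine sub_ne_zero.mpr fun heq => hnot ?_
        have := hinj (by simp [hi]) (by simp) heq
        rwa [← this]
      exact (mul_eq_zero.mp (hct i hi)).resolve_right hne'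
    intro i hi
    rcases Finset.mem_insert.mp hi with rfl | hit
    · have e := h N le_rfl (by push_cast [hC]; omega)
      rw [Finset.sum_insert hnot, Finset.sum_eq_zero (fun i hi => by
        rw [hct' i hi, zero_mul]), add_zero] at e
      exact (mul_eq_zero.mp e).resolve_right (zpow_ne_zero _ hi0)
    · exact hct' i hit

/-- A subset `K` of `ℤ²` (the dual of `𝕋²`) is strictly positive definite if the only
trigonometric polynomial `γ ↦ ∑ i, c i * (x i).1 ^ γ.1 * (x i).2 ^ γ.2` (with pairwise
distinct points `x i ∈ 𝕋²`) vanishing on `K` has all coefficients zero. -/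
def IsSPDSetZ2 (K : Set (ℤ × ℤ)) : Prop :=
  ∀ (n : ℕ) (x : Fin n → Circle × Circle) (c : Fin n → ℂ), Function.Injective x →
    (∀ γ ∈ K, ∑ i, c i * ((x i).1 : ℂ) ^ γ.1 * ((x i).2 : ℂ) ^ γ.2 = 0) → ∀ i, c i = 0

/-- The set `⋃_{n ≥ 1} {n} × {-n, …, n} ⊆ ℤ²` is strictly positive definite. -/
theorem spd_triangle_set :
    IsSPDSetZ2 {γ : ℤ × ℤ | 1 ≤ γ.1 ∧ |γ.2| ≤ γ.1} := by
  classical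
  intro n x c hx H
  set a : Fin n → ℂ := fun i => ((x i).1 : ℂ) with ha_def
  set b : Fin n → ℂ := fun i => ((x i).2 : ℂ) with hb_def
  have hH : ∀ p m : ℤ, 1 ≤ p → |m| ≤ p → ∑ i, c i * a i ^ p * b i ^ m = 0 :=
    fun p m hp hm => H (p, m) ⟨hp, hm⟩
  have ha : ∀ i, a i ≠ 0 := fun i => Circle.coe_ne_zero _
  have hb : ∀ i, b i ≠ 0 := fun i => Circle.coe_ne_zero _
  set B : Finset ℂ := Finset.image b Finset.univ with hB_def
  have hBcard : (B.card : ℤ) ≤ n := by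
    exact_mod_cast le_trans Finset.card_image_le (by simp)
  -- Stage 1: for each large p and each fiber value β, the fiber sum vanishes.
  have stage1 : ∀ p : ℤ, (n : ℤ) ≤ p → 1 ≤ p → ∀ β ∈ B,
      ∑ i ∈ Finset.univ.filter (fun i => b i = β), c i * a i ^ p = 0 := by
    intro p hp hp1
    refine keyA id 0 B
      (fun β => ∑ i ∈ Finset.univ.filter (fun i => b i = β), c i * a i ^ p)
      (fun β hβ => ?_) (Set.injOn_id _) (fun j hj hj2 => ?_)
    · obtain ⟨i, _, rfl⟩ := Finset.mem_image.mp hβ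
      exact hb i
    · have e : ∀ β ∈ B,
          (∑ i ∈ Finset.univ.filter (fun i => b i = β), c i * a i ^ p) * (id β) ^ j
            = ∑ i ∈ Finset.univ.filter (fun i => b i = β), c i * a i ^ p * b i ^ j := by
        intro β hβ
        rw [Finset.sum_mul]
        exact Finset.sum_congr rfl fun i hi => by
          rw [(Finset.mem_filter.mp hi).2]; rfl
      rw [Finset.sum_congr rfl e,
        Finset.sum_fiberwise_of_maps_to (fun i _ => Finset.mem_image_of_mem b (mem_univ i))]
      exact hH p j hp1 (by rw [abs_of_nonneg hj]; omega)
  -- Stage 2: within each fiber, a Vandermonde argument in the first coordinate.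
  intro i0
  set N : ℤ := max (n : ℤ) 1 with hN_def
  set s : Finset (Fin n) := Finset.univ.filter (fun i => b i = b i0) with hs_def
  have hscard : (s.card : ℤ) ≤ n := by exact_mod_cast le_trans (Finset.card_filter_le _ _) (by simp)
  refine keyA a N s c (fun i _ => ha i) (fun i hi i' hi' hai => ?_) (fun j hj hj2 => ?_) i0
    (Finset.mem_filter.mpr ⟨mem_univ _, rfl⟩)
  · -- injectivity of a on the fiber
    simp only [Finset.mem_coe, hs_def, Finset.mem_filter] at hi hi'
    apply hx
    have h1 : (x i).1 = (x i').1 := Subtype.coe_injective hai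
    have h2 : (x i).2 = (x i').2 := Subtype.coe_injective (hi.2.trans hi'.2.symm)
    exact Prod.ext h1 h2
  · exact stage1 j (le_trans (le_max_left _ _) hj) (le_trans (le_max_right _ _) hj)
      (b i0) (Finset.mem_image_of_mem b (mem_univ i0))
end
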